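/- arXiv:1205.5781 — 5 statements merged into one kernel-verified Lean document; each statement's English description precedes it below -/
import Mathlib

section
/- Let R be a commutative ring and let a, b, c be units of R. Then the matrices satisfy the colored braid relation (the matrix verification of the Reidemeister III move for the representation φ of the colored braid algebra on three strands): M1(b,c) · M2(a,c) · M1(a,b) = M2(a,b) · M1(a,c) · M2(b,c), where in each product the left factor corresponds to the top crossing of the braid word and the colors are those carried by the two strands entering each crossing when the three strands are colored a, b, c from left to right along the bottom. -/
open Matrix

/-- The 8×8 matrix assigned by Kennedy's representation φ to the positive
colored braid generator σ1, where `x` is the color of the first strand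
entering the crossing and `y` is the color of the second. -/
def M1 {R : Type*} [CommRing R] (x y : Rˣ) : Matrix (Fin 8) (Fin 8) R :=
  !![(x : R), 0, 0, 0, 0, 0, 0, 0;
     0, 0, ((x⁻¹ : Rˣ) : R), 0, 0, 0, 0, 0;
     0, (x : R), (y : R) - ((y⁻¹ : Rˣ) : R), 0, 0, 0, 0, 0;
     0, 0, 0, (x : R), 0, 0, 0, 0;
     0, 0, 0, 0, (y : R) - ((y⁻¹ : Rˣ) : R), (x : R), 0, 0;
     0, 0, 0, 0, ((x⁻¹ : Rˣ) : R), 0, 0, 0;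
     0, 0, 0, 0, 0, 0, -((x⁻¹ : Rˣ) : R), 0;
     0, 0, 0, 0, 0, 0, 0, -((x⁻¹ : Rˣ) : R)]

/-- The 8×8 matrix assigned by Kennedy's representation φ to the positive
colored braid generator σ2, where `x` is the color of the first strand
entering the crossing and `y` is the color of the second. -/
def M2 {R : Type*} [CommRing R] (x y : Rˣ) : Matrix (Fin 8) (Fin 8) R :=
  !![(x : R), 0, 0, 0, 0, 0, 0, 0;
     0, (x : R), 0, 0, 0, 0, 0, 0;
     0, 0, 0, ((x⁻¹ : Rˣ) : R), 0, 0, 0, 0;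
     0, 0, (x : R), (y : R) - ((y⁻¹ : Rˣ) : R), 0, 0, 0, 0;
     0, 0, 0, 0, -((x⁻¹ : Rˣ) : R), 0, 0, 0;
     0, 0, 0, 0, 0, (y : R) - ((y⁻¹ : Rˣ) : R), (x : R), 0;
     0, 0, 0, 0, 0, ((x⁻¹ : Rˣ) : R), 0, 0;
     0, 0, 0, 0, 0, 0, 0, -((x⁻¹ : Rˣ) : R)]


private lemma cbr_cons_val_five {α : Type*} {m : ℕ} (x : α) (u : Fin m.succ.succ.succ.succ.succ → α) :
    Matrix.vecCons x u 5 = Matrix.vecHead (Matrix.vecTail (Matrix.vecTail (Matrix.vecTail (Matrix.vecTail u)))) := rfl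

private lemma cbr_cons_val_six {α : Type*} {m : ℕ} (x : α) (u : Fin m.succ.succ.succ.succ.succ.succ → α) :
    Matrix.vecCons x u 6 = Matrix.vecHead (Matrix.vecTail (Matrix.vecTail (Matrix.vecTail (Matrix.vecTail (Matrix.vecTail u))))) := rfl

private lemma cbr_cons_val_seven {α : Type*} {m : ℕ} (x : α) (u : Fin m.succ.succ.succ.succ.succ.succ.succ → α) :
    Matrix.vecCons x u 7 = Matrix.vecHead (Matrix.vecTail (Matrix.vecTail (Matrix.vecTail (Matrix.vecTail (Matrix.vecTail (Matrix.vecTail u)))))) := rfl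

set_option maxHeartbeats 1000000 in
private lemma cbr_row0 {R : Type*} [CommRing R] (a b c : Rˣ) (j : Fin 8) :
    (M1 b c * M2 a c * M1 a b) 0 j = (M2 a b * M1 a c * M2 b c) 0 j := by
  fin_cases j <;>
    simp [M1, M2, Matrix.mul_apply, Fin.sum_univ_succ, cbr_cons_val_five, cbr_cons_val_six,
      cbr_cons_val_seven] <;>
    ring_nf

set_option maxHeartbeats 1000000 in
private lemma cbr_row1 {R : Type*} [CommRing R] (a b c : Rˣ) (j : Fin 8) :
    (M1 b c * M2 a c * M1 a b) 1 j = (M2 a b * M1 a c * M2 b c) 1 j := by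
  fin_cases j <;>
    simp [M1, M2, Matrix.mul_apply, Fin.sum_univ_succ, cbr_cons_val_five, cbr_cons_val_six,
      cbr_cons_val_seven] <;>
    ring_nf

set_option maxHeartbeats 1000000 in
private lemma cbr_row2 {R : Type*} [CommRing R] (a b c : Rˣ) (j : Fin 8) :
    (M1 b c * M2 a c * M1 a b) 2 j = (M2 a b * M1 a c * M2 b c) 2 j := by
  fin_cases j <;>
    simp [M1, M2, Matrix.mul_apply, Fin.sum_univ_succ, cbr_cons_val_five, cbr_cons_val_six,
      cbr_cons_val_seven] <;>
    ring_nf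

set_option maxHeartbeats 1000000 in
private lemma cbr_row3 {R : Type*} [CommRing R] (a b c : Rˣ) (j : Fin 8) :
    (M1 b c * M2 a c * M1 a b) 3 j = (M2 a b * M1 a c * M2 b c) 3 j := by
  fin_cases j <;>
    simp [M1, M2, Matrix.mul_apply, Fin.sum_univ_succ, cbr_cons_val_five, cbr_cons_val_six,
      cbr_cons_val_seven] <;>
    ring_nf

set_option maxHeartbeats 1000000 in
private lemma cbr_row4 {R : Type*} [CommRing R] (a b c : Rˣ) (j : Fin 8) :
    (M1 b c * M2 a c * M1 a b) 4 j = (M2 a b * M1 a c * M2 b c) 4 j := by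
  fin_cases j <;>
    simp [M1, M2, Matrix.mul_apply, Fin.sum_univ_succ, cbr_cons_val_five, cbr_cons_val_six,
      cbr_cons_val_seven] <;>
    ring_nf

set_option maxHeartbeats 1000000 in
private lemma cbr_row5 {R : Type*} [CommRing R] (a b c : Rˣ) (j : Fin 8) :
    (M1 b c * M2 a c * M1 a b) 5 j = (M2 a b * M1 a c * M2 b c) 5 j := by
  fin_cases j <;>
    simp [M1, M2, Matrix.mul_apply, Fin.sum_univ_succ, cbr_cons_val_five, cbr_cons_val_six,
      cbr_cons_val_seven] <;>
    ring_nf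

set_option maxHeartbeats 1000000 in
private lemma cbr_row6 {R : Type*} [CommRing R] (a b c : Rˣ) (j : Fin 8) :
    (M1 b c * M2 a c * M1 a b) 6 j = (M2 a b * M1 a c * M2 b c) 6 j := by
  fin_cases j <;>
    simp [M1, M2, Matrix.mul_apply, Fin.sum_univ_succ, cbr_cons_val_five, cbr_cons_val_six,
      cbr_cons_val_seven] <;>
    ring_nf

set_option maxHeartbeats 1000000 in
private lemma cbr_row7 {R : Type*} [CommRing R] (a b c : Rˣ) (j : Fin 8) :
    (M1 b c * M2 a c * M1 a b) 7 j = (M2 a b * M1 a c * M2 b c) 7 j := by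
  fin_cases j <;>
    simp [M1, M2, Matrix.mul_apply, Fin.sum_univ_succ, cbr_cons_val_five, cbr_cons_val_six,
      cbr_cons_val_seven] <;>
    ring_nf

/-- The colored braid relation (matrix form of Reidemeister III) for the
representation φ: with bottom strands colored `a`, `b`, `c` from left to
right, `φ(σ1σ2σ1) = φ(σ2σ1σ2)`, the left factor of each product being the
top crossing. -/
theorem colored_braid_relation {R : Type*} [CommRing R] (a b c : Rˣ) :
    M1 b c * M2 a c * M1 a b = M2 a b * M1 a c * M2 b c := by
  ext i j
  fin_cases i
  · exact cbr_row0 a b c j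
  · exact cbr_row1 a b c j
  · exact cbr_row2 a b c j
  · exact cbr_row3 a b c j
  · exact cbr_row4 a b c j
  · exact cbr_row5 a b c j
  · exact cbr_row6 a b c j
  · exact cbr_row7 a b c j
end

section
/- Let R be a commutative ring and let q be a unit of R. Then the matrix M1(q,q) satisfies the single-variable Alexander skein relation for two strands of the same color: M1(q,q)² = (q − q⁻¹)·M1(q,q) + I₈, where I₈ is the 8×8 identity matrix; equivalently, the matrix of the positive crossing minus the matrix of the negative crossing (the inverse of M1(q,q)) equals (q − q⁻¹) times the identity. -/
open Matrix

namespace Matrix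
variable {α : Type*} {m : ℕ}

@[simp]
lemma vecHead_const' (c : α) : vecHead (fun _ : Fin m.succ => c) = c := rfl

@[simp]
lemma vecTail_const' (c : α) : vecTail (fun _ : Fin m.succ => c) = fun _ => c := rfl

@[simp]
lemma cons_val_five' (x : α) (u : Fin m.succ.succ.succ.succ.succ → α) :
    vecCons x u 5 = vecHead (vecTail (vecTail (vecTail (vecTail u)))) :=
  rfl

@[simp]
lemma cons_val_six' (x : α) (u : Fin m.succ.succ.succ.succ.succ.succ → α) :
    vecCons x u 6 = vecHead (vecTail (vecTail (vecTail (vecTail (vecTail u))))) :=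
  rfl

@[simp]
lemma cons_val_seven' (x : α) (u : Fin m.succ.succ.succ.succ.succ.succ.succ → α) :
    vecCons x u 7 = vecHead (vecTail (vecTail (vecTail (vecTail (vecTail (vecTail u)))))) :=
  rfl

end Matrix

set_option maxHeartbeats 1600000 in
/-- The single-variable Alexander skein relation for two strands of the same
color `q`: `M1(q,q)² = (q − q⁻¹)·M1(q,q) + I₈`. -/
theorem skein_relation_M1 {R : Type*} [CommRing R] (q : Rˣ) :
    M1 q q * M1 q q
      = ((q : R) - ((q⁻¹ : Rˣ) : R)) • M1 q q + (1 : Matrix (Fin 8) (Fin 8) R) := by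
  have h : ((q⁻¹ : Rˣ) : R) * (q : R) = 1 := by
    rw [← Units.val_mul, inv_mul_cancel, Units.val_one]
  have h' : (q : R) * ((q⁻¹ : Rˣ) : R) = 1 := by
    rw [← Units.val_mul, mul_inv_cancel, Units.val_one]
  ext i j
  fin_cases i <;> fin_cases j <;>
    simp [M1, Matrix.mul_apply, Fin.sum_univ_eight, Matrix.one_apply] <;>
    ring_nf <;> simp [h, h']
end

section
/- Let R be a commutative ring and let q be a unit of R. Then the matrix M2(q,q) satisfies the single-variable Alexander skein relation for two strands of the same color: M2(q,q)² = (q − q⁻¹)·M2(q,q) + I₈, where I₈ is the 8×8 identity matrix. -/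
open Matrix

@[simp] lemma cv58 {α : Type*} (x : α) (u : Fin 7 → α) : Matrix.vecCons x u 5 = u 4 := rfl
@[simp] lemma cv68 {α : Type*} (x : α) (u : Fin 7 → α) : Matrix.vecCons x u 6 = u 5 := rfl
@[simp] lemma cv78 {α : Type*} (x : α) (u : Fin 7 → α) : Matrix.vecCons x u 7 = u 6 := rfl
@[simp] lemma cv57 {α : Type*} (x : α) (u : Fin 6 → α) : Matrix.vecCons x u 5 = u 4 := rfl
@[simp] lemma cv67 {α : Type*} (x : α) (u : Fin 6 → α) : Matrix.vecCons x u 6 = u 5 := rfl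
@[simp] lemma cv56 {α : Type*} (x : α) (u : Fin 5 → α) : Matrix.vecCons x u 5 = u 4 := rfl


set_option maxHeartbeats 2000000 in
/-- The single-variable Alexander skein relation for two strands of the same
color `q`: `M2(q,q)² = (q − q⁻¹)·M2(q,q) + I₈`. -/
theorem skein_relation_M2 {R : Type*} [CommRing R] (q : Rˣ) :
    M2 q q * M2 q q
      = ((q : R) - ((q⁻¹ : Rˣ) : R)) • M2 q q + (1 : Matrix (Fin 8) (Fin 8) R) := by
  ext i j
  fin_cases i <;> fin_cases j <;>
    simp [M2, Matrix.mul_apply, Fin.sum_univ_eight, Matrix.one_apply,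
      Matrix.vecHead, Matrix.vecTail] <;>
    (try ring_nf) <;>
    (try simp [q.inv_mul, q.mul_inv, Matrix.vecHead, Matrix.vecTail]) <;>
    (try ring_nf)
end

section
/- Let R be a commutative ring and let a, b be units of R. Let X = M1(b,a)·M1(a,b) be the image under the representation φ of the full twist σ1² on two adjacent strands colored a and b (bottom colors a, b). Then Murakami's second axiom holds in the representation: X² + I₈ = (ab + a⁻¹b⁻¹)·X, where I₈ is the 8×8 identity matrix; equivalently, the images of the double positive twist and the double negative twist sum to (ab + a⁻¹b⁻¹) times the identity. -/
open Matrix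

@[simp]
lemma cons_val_five {α : Type*} {m : ℕ} (x : α) (u : Fin (m + 5) → α) :
    Matrix.vecCons x u 5 =
      Matrix.vecHead (Matrix.vecTail (Matrix.vecTail (Matrix.vecTail (Matrix.vecTail u)))) :=
  rfl

@[simp]
lemma cons_val_six {α : Type*} {m : ℕ} (x : α) (u : Fin (m + 6) → α) :
    Matrix.vecCons x u 6 =
      Matrix.vecHead (Matrix.vecTail (Matrix.vecTail (Matrix.vecTail
        (Matrix.vecTail (Matrix.vecTail u))))) :=
  rfl

@[simp]
lemma cons_val_seven {α : Type*} {m : ℕ} (x : α) (u : Fin (m + 7) → α) :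
    Matrix.vecCons x u 7 =
      Matrix.vecHead (Matrix.vecTail (Matrix.vecTail (Matrix.vecTail
        (Matrix.vecTail (Matrix.vecTail (Matrix.vecTail u)))))) :=
  rfl

def XE {R : Type*} [CommRing R] (a b : Rˣ) : Matrix (Fin 8) (Fin 8) R :=
  !![(a : R)*(b : R), 0, 0, 0, 0, 0, 0, 0;
     0, (a : R)*((b⁻¹ : Rˣ) : R), 1 - ((b⁻¹ : Rˣ) : R)*((b⁻¹ : Rˣ) : R), 0, 0, 0, 0, 0;
     0, (a : R)*(a : R) - 1, (a : R)*(b : R) - (a : R)*((b⁻¹ : Rˣ) : R) + ((a⁻¹ : Rˣ) : R)*((b⁻¹ : Rˣ) : R), 0, 0, 0, 0, 0;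
     0, 0, 0, (a : R)*(b : R), 0, 0, 0, 0;
     0, 0, 0, 0, (a : R)*(b : R) - (a : R)*((b⁻¹ : Rˣ) : R) + ((a⁻¹ : Rˣ) : R)*((b⁻¹ : Rˣ) : R), (a : R)*(a : R) - 1, 0, 0;
     0, 0, 0, 0, 1 - ((b⁻¹ : Rˣ) : R)*((b⁻¹ : Rˣ) : R), (a : R)*((b⁻¹ : Rˣ) : R), 0, 0;
     0, 0, 0, 0, 0, 0, ((a⁻¹ : Rˣ) : R)*((b⁻¹ : Rˣ) : R), 0;
     0, 0, 0, 0, 0, 0, 0, ((a⁻¹ : Rˣ) : R)*((b⁻¹ : Rˣ) : R)]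
set_option maxHeartbeats 4000000 in
lemma M1_mul_M1 {R : Type*} [CommRing R] (a b : Rˣ) :
    M1 b a * M1 a b = XE a b := by
  have ha : (a : R) * ((a⁻¹ : Rˣ) : R) = 1 := Units.mul_inv a
  have hb : (b : R) * ((b⁻¹ : Rˣ) : R) = 1 := Units.mul_inv b
  ext i j
  fin_cases i <;> fin_cases j <;>
    simp [M1, XE, Matrix.mul_apply, Fin.sum_univ_succ, Matrix.vecHead, Matrix.vecTail,
      Function.comp] <;>
    first
      | ring1
      | linear_combination ha
      | linear_combination -ha
      | linear_combination hb
      | linear_combination -hb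

set_option maxHeartbeats 4000000 in
/-- Murakami's second axiom in the representation φ for the full twist on the
first two strands, colored `a` and `b`: with `X = M1(b,a)·M1(a,b)`,
`X² + I₈ = (ab + a⁻¹b⁻¹)·X`. -/
theorem murakami_second_axiom_sigma1 {R : Type*} [CommRing R] (a b : Rˣ) :
    let X : Matrix (Fin 8) (Fin 8) R := M1 b a * M1 a b
    X * X + (1 : Matrix (Fin 8) (Fin 8) R)
      = ((a : R) * (b : R) + ((a⁻¹ : Rˣ) : R) * ((b⁻¹ : Rˣ) : R)) • X := by
  intro X
  have ha : (a : R) * ((a⁻¹ : Rˣ) : R) = 1 := Units.mul_inv a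
  have hb : (b : R) * ((b⁻¹ : Rˣ) : R) = 1 := Units.mul_inv b
  have hX : X = XE a b := M1_mul_M1 a b
  rw [hX]
  ext i j
  fin_cases i <;> fin_cases j <;>
    simp [XE, Matrix.mul_apply, Fin.sum_univ_succ, Matrix.one_apply, Matrix.vecHead,
      Matrix.vecTail, Function.comp] <;>
    first
      | ring1
      | linear_combination (-(b : R) * ((b⁻¹ : Rˣ) : R)) * ha - hb
      | linear_combination (-((b⁻¹ : Rˣ) : R) * ((b⁻¹ : Rˣ) : R)) * ha
          - (a : R) * (a : R) * hb
      | linear_combination ha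
      | linear_combination hb
end

section
/- Let R be a commutative ring and let b, c be units of R. Let Y = M2(c,b)·M2(b,c) be the image under the representation φ of the full twist σ2² on two adjacent strands colored b and c (bottom colors b, c in positions two and three). Then Murakami's second axiom holds in the representation: Y² + I₈ = (bc + b⁻¹c⁻¹)·Y, where I₈ is the 8×8 identity matrix. -/
open Matrix
set_option maxHeartbeats 4000000

section CV
variable {α : Type*}
theorem cv_3_2 (a : α) (u : Fin 2 → α) : Matrix.vecCons a u (2 : Fin 3) = u 1 := rfl
theorem cv_4_2 (a : α) (u : Fin 3 → α) : Matrix.vecCons a u (2 : Fin 4) = u 1 := rfl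
theorem cv_4_3 (a : α) (u : Fin 3 → α) : Matrix.vecCons a u (3 : Fin 4) = u 2 := rfl
theorem cv_5_2 (a : α) (u : Fin 4 → α) : Matrix.vecCons a u (2 : Fin 5) = u 1 := rfl
theorem cv_5_3 (a : α) (u : Fin 4 → α) : Matrix.vecCons a u (3 : Fin 5) = u 2 := rfl
theorem cv_5_4 (a : α) (u : Fin 4 → α) : Matrix.vecCons a u (4 : Fin 5) = u 3 := rfl
theorem cv_6_2 (a : α) (u : Fin 5 → α) : Matrix.vecCons a u (2 : Fin 6) = u 1 := rfl
theorem cv_6_3 (a : α) (u : Fin 5 → α) : Matrix.vecCons a u (3 : Fin 6) = u 2 := rfl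
theorem cv_6_4 (a : α) (u : Fin 5 → α) : Matrix.vecCons a u (4 : Fin 6) = u 3 := rfl
theorem cv_6_5 (a : α) (u : Fin 5 → α) : Matrix.vecCons a u (5 : Fin 6) = u 4 := rfl
theorem cv_7_2 (a : α) (u : Fin 6 → α) : Matrix.vecCons a u (2 : Fin 7) = u 1 := rfl
theorem cv_7_3 (a : α) (u : Fin 6 → α) : Matrix.vecCons a u (3 : Fin 7) = u 2 := rfl
theorem cv_7_4 (a : α) (u : Fin 6 → α) : Matrix.vecCons a u (4 : Fin 7) = u 3 := rfl
theorem cv_7_5 (a : α) (u : Fin 6 → α) : Matrix.vecCons a u (5 : Fin 7) = u 4 := rfl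
theorem cv_7_6 (a : α) (u : Fin 6 → α) : Matrix.vecCons a u (6 : Fin 7) = u 5 := rfl
theorem cv_8_2 (a : α) (u : Fin 7 → α) : Matrix.vecCons a u (2 : Fin 8) = u 1 := rfl
theorem cv_8_3 (a : α) (u : Fin 7 → α) : Matrix.vecCons a u (3 : Fin 8) = u 2 := rfl
theorem cv_8_4 (a : α) (u : Fin 7 → α) : Matrix.vecCons a u (4 : Fin 8) = u 3 := rfl
theorem cv_8_5 (a : α) (u : Fin 7 → α) : Matrix.vecCons a u (5 : Fin 8) = u 4 := rfl
theorem cv_8_6 (a : α) (u : Fin 7 → α) : Matrix.vecCons a u (6 : Fin 8) = u 5 := rfl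
theorem cv_8_7 (a : α) (u : Fin 7 → α) : Matrix.vecCons a u (7 : Fin 8) = u 6 := rfl
end CV

/-- Murakami's second axiom in the representation φ for the full twist on the
second and third strands, colored `b` and `c`: with `Y = M2(c,b)·M2(b,c)`,
`Y² + I₈ = (bc + b⁻¹c⁻¹)·Y`. -/

theorem murakami_second_axiom_sigma2 {R : Type*} [CommRing R] (b c : Rˣ) :
    let Y : Matrix (Fin 8) (Fin 8) R := M2 c b * M2 b c
    Y * Y + (1 : Matrix (Fin 8) (Fin 8) R)
      = ((b : R) * (c : R) + ((b⁻¹ : Rˣ) : R) * ((c⁻¹ : Rˣ) : R)) • Y := by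
  intro Y
  have hb : (b : R) * ((b⁻¹ : Rˣ) : R) = 1 := by exact_mod_cast b.mul_inv
  have hc : (c : R) * ((c⁻¹ : Rˣ) : R) = 1 := by exact_mod_cast c.mul_inv
  have hY : Y =
    !![(c : R) * b, 0, 0, 0, 0, 0, 0, 0;
       0, (c : R) * b, 0, 0, 0, 0, 0, 0;
       0, 0, ((c⁻¹ : Rˣ) : R) * b, ((c⁻¹ : Rˣ) : R) * ((c : R) - ((c⁻¹ : Rˣ) : R)), 0, 0, 0, 0;
       0, 0, ((b : R) - ((b⁻¹ : Rˣ) : R)) * b,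
         (c : R) * ((b⁻¹ : Rˣ) : R) + ((b : R) - ((b⁻¹ : Rˣ) : R)) * ((c : R) - ((c⁻¹ : Rˣ) : R)), 0, 0, 0, 0;
       0, 0, 0, 0, ((c⁻¹ : Rˣ) : R) * ((b⁻¹ : Rˣ) : R), 0, 0, 0;
       0, 0, 0, 0, 0,
         (c : R) * ((b⁻¹ : Rˣ) : R) + ((b : R) - ((b⁻¹ : Rˣ) : R)) * ((c : R) - ((c⁻¹ : Rˣ) : R)),
         ((b : R) - ((b⁻¹ : Rˣ) : R)) * b, 0;
       0, 0, 0, 0, 0, ((c⁻¹ : Rˣ) : R) * ((c : R) - ((c⁻¹ : Rˣ) : R)), ((c⁻¹ : Rˣ) : R) * b, 0;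
       0, 0, 0, 0, 0, 0, 0, ((c⁻¹ : Rˣ) : R) * ((b⁻¹ : Rˣ) : R)] := by
    show M2 c b * M2 b c = _
    ext i j
    fin_cases i <;> fin_cases j <;>
      simp [M2, Matrix.mul_apply, Fin.sum_univ_eight, Matrix.vecHead, Matrix.vecTail, Function.comp, cv_3_2, cv_4_2, cv_4_3, cv_5_2, cv_5_3, cv_5_4, cv_6_2, cv_6_3, cv_6_4, cv_6_5, cv_7_2, cv_7_3, cv_7_4, cv_7_5, cv_7_6, cv_8_2, cv_8_3, cv_8_4, cv_8_5, cv_8_6, cv_8_7] <;> ring1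
  rw [hY]
  ext i j
  fin_cases i <;> fin_cases j <;>
    simp [Matrix.mul_apply, Fin.sum_univ_eight, Matrix.vecHead, Matrix.vecTail, Function.comp, Matrix.one_apply, cv_3_2, cv_4_2, cv_4_3, cv_5_2, cv_5_3, cv_5_4, cv_6_2, cv_6_3, cv_6_4, cv_6_5, cv_7_2, cv_7_3, cv_7_4, cv_7_5, cv_7_6, cv_8_2, cv_8_3, cv_8_4, cv_8_5, cv_8_6, cv_8_7] <;>
    first
      | ring1
      | linear_combination (-((c : R) * ((c⁻¹ : Rˣ) : R))) * hb - hc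
end
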